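/- arXiv:1005.2199 — 6 statements merged into one kernel-verified Lean document; each statement's English description precedes it below -/
import Mathlib

section
/- Let p ≥ 2 be an integer, m = 3p² − 3p + 1, and r = m − (3p − 1). Then r³ ≡ 1 (mod m), r has multiplicative order exactly 3 modulo m, and both r − 1 and r² − 1 are units in ℤ/mℤ. -/
/-- For `p ≥ 2`, `m = 3p² − 3p + 1`, `r = m − (3p − 1)`: `r³ ≡ 1 (mod m)`,
`r` has order exactly `3` mod `m`, and `r − 1`, `r² − 1` are units in `ℤ/mℤ`. -/
theorem stmt2 (p : ℕ) (hp : 2 ≤ p) :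
    let m := 3 * p ^ 2 - 3 * p + 1
    let r := m - (3 * p - 1)
    ((r : ZMod m) ^ 3 = 1) ∧ orderOf (r : ZMod m) = 3 ∧
      IsUnit ((r : ZMod m) - 1) ∧ IsUnit ((r : ZMod m) ^ 2 - 1) := by
  obtain ⟨q, rfl⟩ := Nat.exists_eq_add_of_le hp
  intro m r
  have hsq : (2 + q) ^ 2 = q ^ 2 + 4 * q + 4 := by ring
  have hm : m = 3 * q ^ 2 + 9 * q + 7 := by simp only [m]; omega
  have hr : r = 3 * q ^ 2 + 6 * q + 2 := by simp only [r, hm]; omega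
  have hfact : Fact (1 < m) := ⟨by omega⟩
  -- key cast identities
  have key2 : (r : ZMod m) = -(3 * (q : ZMod m) + 5) := by
    have h : r + (3 * q + 5) = m := by rw [hm, hr]; ring
    have h2 : ((r + (3 * q + 5) : ℕ) : ZMod m) = ((m : ℕ) : ZMod m) := by rw [h]
    rw [ZMod.natCast_self] at h2
    push_cast at h2
    linear_combination h2
  have key1 : (3 * (q : ZMod m) + 5) ^ 3 = -1 := by
    have h : (3 * q + 5) ^ 3 + 1 = m * (9 * q + 18) := by rw [hm]; ring
    have h2 : (((3 * q + 5) ^ 3 + 1 : ℕ) : ZMod m) = ((m * (9 * q + 18) : ℕ) : ZMod m) := by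
      rw [h]
    rw [Nat.cast_mul, ZMod.natCast_self, zero_mul] at h2
    push_cast at h2
    linear_combination h2
  have key3 : (3 * (q : ZMod m) + 6) * ((q : ZMod m) + 1) = -1 := by
    have h : (3 * q + 6) * (q + 1) + 1 = m := by rw [hm]; ring
    have h2 : (((3 * q + 6) * (q + 1) + 1 : ℕ) : ZMod m) = ((m : ℕ) : ZMod m) := by rw [h]
    rw [ZMod.natCast_self] at h2
    push_cast at h2
    linear_combination h2
  have key4 : (3 * (q : ZMod m) + 4) * (3 * (q : ZMod m) + 5) = -1 := by
    have h : (3 * q + 4) * (3 * q + 5) + 1 = m * 3 := by rw [hm]; ring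
    have h2 : (((3 * q + 4) * (3 * q + 5) + 1 : ℕ) : ZMod m) = ((m * 3 : ℕ) : ZMod m) := by
      rw [h]
    rw [Nat.cast_mul, ZMod.natCast_self, zero_mul] at h2
    push_cast at h2
    linear_combination h2
  have cube : (r : ZMod m) ^ 3 = 1 := by rw [key2]; linear_combination -key1
  have unit1 : IsUnit ((r : ZMod m) - 1) :=
    IsUnit.of_mul_eq_one ((q : ZMod m) + 1) (by rw [key2]; linear_combination -key3)
  have unitx1 : IsUnit ((r : ZMod m) + 1) :=
    IsUnit.of_mul_eq_one (3 * (q : ZMod m) + 5) (by rw [key2]; linear_combination -key4)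
  have unit2 : IsUnit ((r : ZMod m) ^ 2 - 1) := by
    have h : ((r : ZMod m) - 1) * ((r : ZMod m) + 1) = (r : ZMod m) ^ 2 - 1 := by ring
    exact h ▸ unit1.mul unitx1
  have hne : (r : ZMod m) ≠ 1 := by
    intro h
    rw [h, sub_self] at unit1
    exact not_isUnit_zero unit1
  have hord : orderOf (r : ZMod m) = 3 := by
    have hdvd : orderOf (r : ZMod m) ∣ 3 := orderOf_dvd_of_pow_eq_one cube
    rcases (Nat.prime_three).eq_one_or_self_of_dvd _ hdvd with h | h
    · exact absurd (orderOf_eq_one_iff.mp h) hne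
    · exact h
  exact ⟨cube, hord, unit1, unit2⟩
end

section
/- Let p ≥ 2 be an integer, m = 2p² − 2p + 1, and r = m − (2p − 1). Then r² ≡ −1 (mod m), so r has multiplicative order exactly 4 modulo m, and r^k − 1 is a unit in ℤ/mℤ for k = 1, 2, 3. -/
/-- For `p ≥ 2`, `m = 2p² − 2p + 1`, `r = m − (2p − 1)`: `r² ≡ −1 (mod m)`,
`r` has order exactly `4` mod `m`, and `r^k − 1` is a unit in `ℤ/mℤ` for `k = 1,2,3`. -/
theorem stmt3 (p : ℕ) (hp : 2 ≤ p) :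
    let m := 2 * p ^ 2 - 2 * p + 1
    let r := m - (2 * p - 1)
    ((r : ZMod m) ^ 2 = -1) ∧ orderOf (r : ZMod m) = 4 ∧
      IsUnit ((r : ZMod m) ^ 1 - 1) ∧ IsUnit ((r : ZMod m) ^ 2 - 1) ∧
        IsUnit ((r : ZMod m) ^ 3 - 1) := by
  intro m r
  have hps : p + 2 ≤ p ^ 2 := by nlinarith
  have hps2 : 2 * p ≤ p ^ 2 + 1 := by nlinarith
  have hm5 : 5 ≤ m := by simp only [m]; omega
  haveI : NeZero m := ⟨by omega⟩
  have hmz : (m : ZMod m) = 0 := ZMod.natCast_self m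
  have hle1 : (1 : ℕ) ≤ 2 * p := by omega
  have hle2 : 2 * p - 1 ≤ m := by simp only [m]; omega
  have hle3 : 2 * p ≤ 2 * p ^ 2 := by omega
  have hr : (r : ZMod m) = 1 - 2 * p := by
    simp only [r]
    rw [Nat.cast_sub hle2, Nat.cast_sub hle1, hmz]
    push_cast
    ring
  have hm0 : 2 * (p : ZMod m) ^ 2 - 2 * p + 1 = 0 := by
    have h : ((2 * p ^ 2 - 2 * p + 1 : ℕ) : ZMod m) = 0 := hmz
    rw [Nat.cast_add, Nat.cast_sub hle3] at h
    push_cast at h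
    exact h
  have hsq : (r : ZMod m) ^ 2 = -1 := by
    rw [hr]; linear_combination (2 : ZMod m) * hm0
  have hneg : (-1 : ZMod m) ≠ 1 := by
    intro h
    have h2 : ((2 : ℕ) : ZMod m) = 0 := by push_cast; linear_combination -h
    have := (ZMod.natCast_eq_zero_iff 2 m).mp h2
    have := Nat.le_of_dvd (by norm_num) this
    omega
  have hpow4 : (r : ZMod m) ^ 4 = 1 := by
    have : (r : ZMod m) ^ 4 = ((r : ZMod m) ^ 2) ^ 2 := by ring
    rw [this, hsq]; ring
  have hdvd : orderOf (r : ZMod m) ∣ 4 := orderOf_dvd_of_pow_eq_one hpow4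
  have hnd2 : ¬ orderOf (r : ZMod m) ∣ 2 := by
    rw [orderOf_dvd_iff_pow_eq_one, hsq]
    exact hneg
  have hord : orderOf (r : ZMod m) = 4 := by
    have h1 : orderOf (r : ZMod m) ≤ 4 := Nat.le_of_dvd (by norm_num) hdvd
    have h0 : 1 ≤ orderOf (r : ZMod m) := by
      rcases Nat.eq_zero_or_pos (orderOf (r : ZMod m)) with h | h
      · rw [h] at hdvd; omega
      · omega
    interval_cases orderOf (r : ZMod m)
    · exact absurd (one_dvd 2) hnd2
    · exact absurd (dvd_refl 2) hnd2
    · norm_num at hdvd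
    · rfl
  have hodd : Odd m := ⟨p ^ 2 - p, by simp only [m]; omega⟩
  have hu2 : IsUnit (2 : ZMod m) := by
    have : ((2 : ℕ) : ZMod m) = 2 := by push_cast; ring
    rw [← this, ZMod.isUnit_iff_coprime]
    rw [Nat.coprime_two_left]
    exact hodd
  have hu : IsUnit ((r : ZMod m) ^ 2 - 1) := by
    have : (r : ZMod m) ^ 2 - 1 = -2 := by rw [hsq]; ring
    rw [this]
    exact hu2.neg
  have hmul : ((r : ZMod m) - 1) * ((r : ZMod m) + 1) = (r : ZMod m) ^ 2 - 1 := by ring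
  have hu1 : IsUnit ((r : ZMod m) - 1) := isUnit_of_mul_isUnit_left (hmul ▸ hu)
  have hup1 : IsUnit ((r : ZMod m) + 1) := isUnit_of_mul_isUnit_right (hmul ▸ hu)
  have hu3 : IsUnit ((r : ZMod m) ^ 3 - 1) := by
    have : (r : ZMod m) ^ 3 - 1 = -((r : ZMod m) + 1) := by
      linear_combination (r : ZMod m) * hsq
    rw [this]
    exact hup1.neg
  exact ⟨hsq, hord, by rw [pow_one]; exact hu1, hu, hu3⟩
end

section
/- Let p ≥ 2, m = p² − p + 1, and r = m − p + 1. If p ≡ 2 (mod 3) then 3 divides m and gcd(r² − 1, m) = gcd(r⁴ − 1, m) = 3; if p ≢ 2 (mod 3), then r² − 1 and r⁴ − 1 are units in ℤ/mℤ. -/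
private lemma gcd_add_mul' (a b k : ℤ) : Int.gcd (a + b * k) b = Int.gcd a b := by
  apply Nat.dvd_antisymm
  · refine Int.natCast_dvd_natCast.mp (Int.dvd_coe_gcd ?_ (Int.gcd_dvd_right _ _))
    have h1 : (↑(Int.gcd (a + b * k) b) : ℤ) ∣ a + b * k := Int.gcd_dvd_left _ _
    have h2 : (↑(Int.gcd (a + b * k) b) : ℤ) ∣ b := Int.gcd_dvd_right _ _
    have h3 : (↑(Int.gcd (a + b * k) b) : ℤ) ∣ (a + b * k) - b * k :=
      dvd_sub h1 (h2.mul_right k)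
    simpa using h3
  · refine Int.natCast_dvd_natCast.mp (Int.dvd_coe_gcd ?_ (Int.gcd_dvd_right _ _))
    exact dvd_add (Int.gcd_dvd_left _ _) ((Int.gcd_dvd_right _ _).mul_right k)

private lemma my_gcd_neg (a b : ℤ) : Int.gcd (-a) b = Int.gcd a b := by
  simp [Int.gcd, Int.natAbs_neg]

/-- For `p ≥ 2`, `m = p² − p + 1`, `r = m − p + 1`: if `p ≡ 2 (mod 3)` then `3 ∣ m` and
`gcd(r² − 1, m) = gcd(r⁴ − 1, m) = 3`; otherwise `r² − 1` and `r⁴ − 1` are units mod `m`. -/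
theorem stmt5 (p : ℕ) (hp : 2 ≤ p) :
    let m := p ^ 2 - p + 1
    let r := m - p + 1
    (p % 3 = 2 → 3 ∣ m ∧ Nat.gcd (r ^ 2 - 1) m = 3 ∧ Nat.gcd (r ^ 4 - 1) m = 3) ∧
    (p % 3 ≠ 2 → IsUnit ((r : ZMod m) ^ 2 - 1) ∧ IsUnit ((r : ZMod m) ^ 4 - 1)) := by
  intro m r
  have hmdef : m = p ^ 2 - p + 1 := rfl
  have hrdef : r = m - p + 1 := rfl
  obtain ⟨k, hk⟩ : ∃ k, p ^ 2 = k := ⟨p ^ 2, rfl⟩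
  have hpk : 2 * p ≤ k := by rw [← hk, pow_two]; nlinarith
  have hm3 : 3 ≤ m := by omega
  have hr2 : 2 ≤ r := by omega
  have hmi : (m : ℤ) = (p : ℤ) ^ 2 - (p : ℤ) + 1 := by
    have : ((p : ℤ)) ^ 2 = (k : ℤ) := by exact_mod_cast congrArg (Nat.cast : ℕ → ℤ) hk
    rw [this]; omega
  have hri : (r : ℤ) = (p : ℤ) ^ 2 - 2 * (p : ℤ) + 2 := by
    have : ((p : ℤ)) ^ 2 = (k : ℤ) := by exact_mod_cast congrArg (Nat.cast : ℕ → ℤ) hk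
    rw [this]; omega
  have h1r2 : 1 ≤ r ^ 2 := Nat.one_le_pow _ _ (by omega)
  have h1r4 : 1 ≤ r ^ 4 := Nat.one_le_pow _ _ (by omega)
  -- key identity modulo m for r^2-1
  have key2 : Nat.gcd (r ^ 2 - 1) m = Nat.gcd (p + 1) 3 := by
    have hA : ((r ^ 2 - 1 : ℕ) : ℤ) =
        -((p : ℤ) + 1) + (m : ℤ) * ((p : ℤ) ^ 2 - 3 * p + 4) := by
      rw [Nat.cast_sub h1r2, Nat.cast_pow, hri, hmi]; push_cast; ring
    have hB : ((p : ℤ) + 1 : ℤ).gcd (m : ℤ) = Nat.gcd (p + 1) 3 := by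
      have hmi2 : (m : ℤ) = 3 + ((p : ℤ) + 1) * ((p : ℤ) - 2) := by rw [hmi]; ring
      calc ((p : ℤ) + 1).gcd (m : ℤ)
          = (m : ℤ).gcd ((p : ℤ) + 1) := Int.gcd_comm _ _
        _ = ((3 : ℤ) + ((p : ℤ) + 1) * ((p : ℤ) - 2)).gcd ((p : ℤ) + 1) := by rw [← hmi2]
        _ = (3 : ℤ).gcd ((p : ℤ) + 1) := gcd_add_mul' _ _ _
        _ = ((p : ℤ) + 1).gcd 3 := Int.gcd_comm _ _
        _ = Nat.gcd (p + 1) 3 := by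
            rw [show ((p : ℤ) + 1) = ((p + 1 : ℕ) : ℤ) by push_cast; ring]
            exact Int.gcd_natCast_natCast _ _
    calc Nat.gcd (r ^ 2 - 1) m
        = Int.gcd ((r ^ 2 - 1 : ℕ) : ℤ) (m : ℤ) := (Int.gcd_natCast_natCast _ _).symm
      _ = Int.gcd (-((p : ℤ) + 1) + (m : ℤ) * ((p : ℤ) ^ 2 - 3 * p + 4)) (m : ℤ) := by
          rw [hA]
      _ = Int.gcd (-((p : ℤ) + 1)) (m : ℤ) := gcd_add_mul' _ _ _
      _ = Int.gcd ((p : ℤ) + 1) (m : ℤ) := my_gcd_neg _ _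
      _ = Nat.gcd (p + 1) 3 := hB
  have key4 : Nat.gcd (r ^ 4 - 1) m = Nat.gcd (p - 2) 3 := by
    have hA : ((r ^ 4 - 1 : ℕ) : ℤ) =
        ((p : ℤ) - 2) + (m : ℤ) * ((m : ℤ) * ((p : ℤ) ^ 2 - 3 * p + 4) ^ 2
          - 2 * ((p : ℤ) ^ 2 - 3 * p + 4) * p + 1) := by
      rw [Nat.cast_sub h1r4, Nat.cast_pow, hri, hmi]; push_cast; ring
    have hB : ((p : ℤ) - 2 : ℤ).gcd (m : ℤ) = Nat.gcd (p - 2) 3 := by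
      have hmi2 : (m : ℤ) = 3 + ((p : ℤ) - 2) * ((p : ℤ) + 1) := by rw [hmi]; ring
      calc ((p : ℤ) - 2).gcd (m : ℤ)
          = (m : ℤ).gcd ((p : ℤ) - 2) := Int.gcd_comm _ _
        _ = ((3 : ℤ) + ((p : ℤ) - 2) * ((p : ℤ) + 1)).gcd ((p : ℤ) - 2) := by rw [← hmi2]
        _ = (3 : ℤ).gcd ((p : ℤ) - 2) := gcd_add_mul' _ _ _
        _ = ((p : ℤ) - 2).gcd 3 := Int.gcd_comm _ _
        _ = Nat.gcd (p - 2) 3 := by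
            rw [show ((p : ℤ) - 2) = ((p - 2 : ℕ) : ℤ) by omega]
            exact Int.gcd_natCast_natCast _ _
    calc Nat.gcd (r ^ 4 - 1) m
        = Int.gcd ((r ^ 4 - 1 : ℕ) : ℤ) (m : ℤ) := (Int.gcd_natCast_natCast _ _).symm
      _ = Int.gcd ((p : ℤ) - 2) (m : ℤ) := by rw [hA]; exact gcd_add_mul' _ _ _
      _ = Nat.gcd (p - 2) 3 := hB
  constructor
  · intro hmod
    obtain ⟨t, ht⟩ : ∃ t, p = 3 * t + 2 := ⟨p / 3, by omega⟩
    refine ⟨?_, ?_, ?_⟩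
    · have : (3 : ℤ) ∣ (m : ℤ) := by
        refine ⟨3 * (t : ℤ) ^ 2 + 3 * t + 1, ?_⟩
        rw [hmi]; push_cast [ht]; ring
      exact_mod_cast this
    · rw [key2]
      have : (3 : ℕ) ∣ p + 1 := ⟨t + 1, by omega⟩
      exact Nat.gcd_eq_right this
    · rw [key4]
      have : (3 : ℕ) ∣ p - 2 := ⟨t, by omega⟩
      exact Nat.gcd_eq_right this
  · intro hmod
    haveI : NeZero m := ⟨by omega⟩
    have hnd1 : ¬ (3 : ℕ) ∣ p + 1 := by omega
    have hnd2 : ¬ (3 : ℕ) ∣ p - 2 := by omega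
    have hc2 : Nat.Coprime (r ^ 2 - 1) m := by
      unfold Nat.Coprime
      rw [key2]
      exact ((Nat.Prime.coprime_iff_not_dvd Nat.prime_three).mpr hnd1).symm
    have hc4 : Nat.Coprime (r ^ 4 - 1) m := by
      unfold Nat.Coprime
      rw [key4]
      exact ((Nat.Prime.coprime_iff_not_dvd Nat.prime_three).mpr hnd2).symm
    constructor
    · have : ((r : ZMod m) ^ 2 - 1) = ((r ^ 2 - 1 : ℕ) : ZMod m) := by
        rw [Nat.cast_sub h1r2]; push_cast; ring
      rw [this]
      exact (ZMod.isUnit_iff_coprime _ m).mpr hc2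
    · have : ((r : ZMod m) ^ 4 - 1) = ((r ^ 4 - 1 : ℕ) : ZMod m) := by
        rw [Nat.cast_sub h1r4]; push_cast; ring
      rw [this]
      exact (ZMod.isUnit_iff_coprime _ m).mpr hc4
end

section
/- Let d, n' be positive integers such that every prime divisor of d divides n', and let l, l' be integers coprime to n'. Then l ≡ l' (mod gcd(d, n')) if and only if there exists an integer t with t ≡ 1 (mod d) and l' ≡ t·l (mod n'). -/
/-- Let `d, n'` be positive integers such that every prime divisor of `d` divides `n'`,
and `l, l'` integers coprime to `n'`. Then `l ≡ l' (mod gcd(d, n'))` iff there exists `t`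
with `t ≡ 1 (mod d)` and `l' ≡ t·l (mod n')`. -/
theorem stmt13 (d n' : ℕ) (hd : 0 < d) (hn' : 0 < n')
    (h : ∀ q : ℕ, q.Prime → q ∣ d → q ∣ n')
    (l l' : ℤ) (hl : IsCoprime l (n' : ℤ)) (hl' : IsCoprime l' (n' : ℤ)) :
    l ≡ l' [ZMOD (Nat.gcd d n' : ℤ)] ↔
      ∃ t : ℤ, t ≡ 1 [ZMOD (d : ℤ)] ∧ l' ≡ t * l [ZMOD (n' : ℤ)] := by
  set g : ℤ := (Nat.gcd d n' : ℤ) with hgdef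
  have hgd : g ∣ (d : ℤ) := Int.natCast_dvd_natCast.mpr (Nat.gcd_dvd_left d n')
  have hgn : g ∣ (n' : ℤ) := Int.natCast_dvd_natCast.mpr (Nat.gcd_dvd_right d n')
  constructor
  · intro hll
    obtain ⟨u, v, huv⟩ := hl
    have hbez : g = (d : ℤ) * Int.gcdA d n' + (n' : ℤ) * Int.gcdB d n' := by
      have := Int.gcd_eq_gcd_ab (d : ℤ) (n' : ℤ)
      simpa [Int.gcd_natCast_natCast, hgdef] using this
    obtain ⟨w, hw⟩ := Int.modEq_iff_dvd.mp hll
    obtain ⟨m, hm⟩ := hgn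
    have hs1 : g ∣ l' * u - 1 := ⟨u * w - v * m, by linear_combination u * hw - v * hm + huv⟩
    obtain ⟨k, hk⟩ := hs1
    refine ⟨1 + (d : ℤ) * Int.gcdA d n' * k, ?_, ?_⟩
    · exact Int.modEq_iff_dvd.mpr ⟨-(Int.gcdA d n' * k), by ring⟩
    · refine Int.modEq_iff_dvd.mpr ⟨-(Int.gcdB d n' * k * l) - l' * v, ?_⟩
      linear_combination (-(k * l)) * hbez - l * hk + l' * huv
  · rintro ⟨t, ht, hlt⟩
    have h1 : t ≡ 1 [ZMOD g] := ht.of_dvd hgd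
    have h2 : l' ≡ t * l [ZMOD g] := hlt.of_dvd hgn
    have h3 := (h2.trans (h1.mul_right l)).symm
    rwa [one_mul] at h3
end

section
/- Let p ≥ 2, m = 3p² − 3p + 1, n = 9p, ζ a primitive m-th root of unity, η a primitive n-th root of unity, and γ = η^{3p} (a primitive cube root of unity). Define linear substitutions on ℂ[X₁, X₂, X₃] by S: (X₁, X₂, X₃) ↦ (ζ⁻¹X₁, ζ^{3p−1}X₂, ζ^{−(3p−2)}X₃) and T: (X₁, X₂, X₃) ↦ (η⁻¹X₃, η⁻¹X₁, η⁻¹X₂). Then the polynomial f = X₁^{3p−1}X₂ + γ X₂^{3p−1}X₃ + γ² X₃^{3p−1}X₁ satisfies f∘S = f and f∘T = f. -/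
open MvPolynomial

/-- The Klein-type polynomial `f = X₁^{3p−1}X₂ + γX₂^{3p−1}X₃ + γ²X₃^{3p−1}X₁` is invariant
under the substitutions `S : (X₁,X₂,X₃) ↦ (ζ⁻¹X₁, ζ^{3p−1}X₂, ζ^{−(3p−2)}X₃)` and
`T : (X₁,X₂,X₃) ↦ (η⁻¹X₃, η⁻¹X₁, η⁻¹X₂)`, where `ζ, η` are primitive `m`-th and `n`-th
roots of unity (`m = 3p² − 3p + 1`, `n = 9p`) and `γ = η^{3p}`. -/
theorem stmt15 (p : ℕ) (hp : 2 ≤ p) (ζ η : ℂ)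
    (hζ : IsPrimitiveRoot ζ (3 * p ^ 2 - 3 * p + 1))
    (hη : IsPrimitiveRoot η (9 * p)) :
    let γ : ℂ := η ^ (3 * p)
    let f : MvPolynomial (Fin 3) ℂ :=
      X 0 ^ (3 * p - 1) * X 1 + C γ * (X 1 ^ (3 * p - 1) * X 2) +
        C (γ ^ 2) * (X 2 ^ (3 * p - 1) * X 0)
    aeval ![C ζ⁻¹ * X 0, C (ζ ^ (3 * p - 1)) * X 1, C (ζ ^ (3 * p - 2))⁻¹ * X 2] f = f ∧
      aeval ![C η⁻¹ * X 2, C η⁻¹ * X 0, C η⁻¹ * X 1] f = f := by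
  obtain ⟨q, rfl⟩ : ∃ q, p = q + 2 := ⟨p - 2, by omega⟩
  intro γ f
  have e1 : 3 * (q + 2) - 1 = 3 * q + 5 := by omega
  have e2 : 3 * (q + 2) - 2 = 3 * q + 4 := by omega
  have e3 : 3 * (q + 2) = 3 * q + 6 := by omega
  have eM : 3 * (q + 2) ^ 2 - 3 * (q + 2) + 1 = 3 * q ^ 2 + 9 * q + 7 := by
    have : 3 * (q + 2) ^ 2 = 3 * q ^ 2 + 12 * q + 12 := by ring
    omega
  have eN : 9 * (q + 2) = 9 * q + 18 := by omega
  rw [eM] at hζ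
  rw [eN] at hη
  have hζ0 : ζ ≠ 0 := hζ.ne_zero (by omega)
  have hη0 : η ≠ 0 := hη.ne_zero (by omega)
  have hM : ζ ^ (3 * q ^ 2 + 9 * q + 7) = 1 := hζ.pow_eq_one
  have hN : η ^ (9 * q + 18) = 1 := hη.pow_eq_one
  have hγ : γ = η ^ (3 * q + 6) := by simp only [γ, e3]
  have hγ3 : γ ^ 3 = 1 := by
    rw [hγ, ← pow_mul]
    have : (3 * q + 6) * 3 = 9 * q + 18 := by ring
    rw [this, hN]
  -- scalar facts for S
  have h1 : ζ⁻¹ ^ (3 * q + 5) * ζ ^ (3 * q + 5) = 1 := by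
    rw [← mul_pow, inv_mul_cancel₀ hζ0, one_pow]
  have hpow : (ζ ^ (3 * q + 5)) ^ (3 * q + 5) = ζ ^ (3 * q + 4) := by
    rw [← pow_mul]
    have : (3 * q + 5) * (3 * q + 5) = (3 * q ^ 2 + 9 * q + 7) * 3 + (3 * q + 4) := by ring
    rw [this, pow_add, pow_mul, hM, one_pow, one_mul]
  have h2 : (ζ ^ (3 * q + 5)) ^ (3 * q + 5) * (ζ ^ (3 * q + 4))⁻¹ = 1 := by
    rw [hpow, mul_inv_cancel₀ (pow_ne_zero _ hζ0)]
  have h3 : ((ζ ^ (3 * q + 4))⁻¹) ^ (3 * q + 5) * ζ⁻¹ = 1 := by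
    rw [← inv_pow, ← pow_mul, ← pow_succ, inv_pow, inv_eq_one]
    have : (3 * q + 4) * (3 * q + 5) + 1 = (3 * q ^ 2 + 9 * q + 7) * 3 := by ring
    rw [this, pow_mul, hM, one_pow]
  -- scalar facts for T
  have he : η⁻¹ ^ (3 * q + 5) * η⁻¹ = γ ^ 2 := by
    rw [← pow_succ, inv_pow, hγ, ← pow_mul]
    have h6 : 3 * q + 5 + 1 = 3 * q + 6 := by omega
    rw [h6]
    symm
    apply eq_inv_of_mul_eq_one_left
    rw [← pow_add]
    have : (3 * q + 6) * 2 + (3 * q + 6) = 9 * q + 18 := by ring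
    rw [this, hN]
  have hT2 : γ * (η⁻¹ ^ (3 * q + 5) * η⁻¹) = 1 := by
    rw [he]
    calc γ * γ ^ 2 = γ ^ 3 := by ring
    _ = 1 := hγ3
  have hT3 : γ ^ 2 * (η⁻¹ ^ (3 * q + 5) * η⁻¹) = γ := by
    rw [he]
    calc γ ^ 2 * γ ^ 2 = γ ^ 3 * γ := by ring
    _ = γ := by rw [hγ3, one_mul]
  -- lift to MvPolynomial
  have H1 : (C ζ⁻¹ : MvPolynomial (Fin 3) ℂ) ^ (3 * q + 5) * C (ζ ^ (3 * q + 5)) = 1 := by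
    rw [← C_pow, ← C_mul, h1, C_1]
  have H2 : (C (ζ ^ (3 * q + 5)) : MvPolynomial (Fin 3) ℂ) ^ (3 * q + 5) *
      C ((ζ ^ (3 * q + 4))⁻¹) = 1 := by
    rw [← C_pow, ← C_mul, h2, C_1]
  have H3 : (C ((ζ ^ (3 * q + 4))⁻¹) : MvPolynomial (Fin 3) ℂ) ^ (3 * q + 5) * C ζ⁻¹ = 1 := by
    rw [← C_pow, ← C_mul, h3, C_1]
  have HE : (C η⁻¹ : MvPolynomial (Fin 3) ℂ) ^ (3 * q + 5) * C η⁻¹ = C (γ ^ 2) := by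
    rw [← C_pow, ← C_mul, he]
  have HT2 : (C γ : MvPolynomial (Fin 3) ℂ) *
      ((C η⁻¹) ^ (3 * q + 5) * C η⁻¹) = 1 := by
    rw [← C_pow, ← C_mul, ← C_mul, hT2, C_1]
  have HT3 : (C (γ ^ 2) : MvPolynomial (Fin 3) ℂ) *
      ((C η⁻¹) ^ (3 * q + 5) * C η⁻¹) = C γ := by
    rw [← C_pow, ← C_mul, ← C_mul, hT3]
  simp only [C_pow] at H1 H2 H3 HE HT2 HT3
  constructor
  · show aeval _ f = f
    simp only [f, e1, e2, map_add, map_mul, map_pow, aeval_C, aeval_X, algebraMap_eq,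
      C_pow, Matrix.cons_val_zero, Matrix.cons_val_one, Matrix.head_cons, Matrix.cons_val_two,
      Matrix.tail_cons]
    linear_combination (X 0 ^ (3 * q + 5) * X 1) * H1 +
      C γ * (X 1 ^ (3 * q + 5) * X 2) * H2 + C γ ^ 2 * (X 2 ^ (3 * q + 5) * X 0) * H3
  · show aeval _ f = f
    simp only [f, e1, e2, map_add, map_mul, map_pow, aeval_C, aeval_X, algebraMap_eq,
      C_pow, Matrix.cons_val_zero, Matrix.cons_val_one, Matrix.head_cons, Matrix.cons_val_two,
      Matrix.tail_cons]
    linear_combination (X 2 ^ (3 * q + 5) * X 0) * HE +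
      (X 0 ^ (3 * q + 5) * X 1) * HT2 + (X 1 ^ (3 * q + 5) * X 2) * HT3
end

section
/- Let p ≥ 2 be an integer and γ = exp(2πi/6). Define f(x, y) = x + γ x^{p+1} y + γ² x^{2p} y^{p+1} + γ³ x^{2p−1} y^{2p} + γ⁴ x^{p−1} y^{2p−1} + γ⁵ y^{p−1}. Then f(−1, −1) = 0 and ∂f/∂x(−1, −1) = 2 − 2p − 2p(−1)^p + γ(−1)^p(2p − 2) ≠ 0; hence the plane curve f = 0 is smooth at the point (−1, −1). -/
/-- For `p ≥ 2` and `γ = exp(2πi/6)`, the polynomial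
`f(x,y) = x + γx^{p+1}y + γ²x^{2p}y^{p+1} + γ³x^{2p−1}y^{2p} + γ⁴x^{p−1}y^{2p−1} + γ⁵y^{p−1}`
satisfies `f(−1,−1) = 0` and `∂f/∂x(−1,−1) = 2 − 2p − 2p(−1)^p + γ(−1)^p(2p−2) ≠ 0`;
hence the curve `f = 0` is smooth at `(−1,−1)`. -/
theorem stmt18 (p : ℕ) (hp : 2 ≤ p) :
    let γ : ℂ := Complex.exp (2 * Real.pi * Complex.I / 6)
    let f : ℂ → ℂ → ℂ := fun x y =>
      x + γ * x ^ (p + 1) * y + γ ^ 2 * x ^ (2 * p) * y ^ (p + 1) +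
        γ ^ 3 * x ^ (2 * p - 1) * y ^ (2 * p) + γ ^ 4 * x ^ (p - 1) * y ^ (2 * p - 1) +
        γ ^ 5 * y ^ (p - 1)
    f (-1) (-1) = 0 ∧
      deriv (fun x => f x (-1)) (-1) =
        2 - 2 * (p : ℂ) - 2 * (p : ℂ) * (-1 : ℂ) ^ p + γ * (-1 : ℂ) ^ p * (2 * (p : ℂ) - 2) ∧
      2 - 2 * (p : ℂ) - 2 * (p : ℂ) * (-1 : ℂ) ^ p + γ * (-1 : ℂ) ^ p * (2 * (p : ℂ) - 2) ≠ 0 := by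
  intro γ f
  obtain ⟨q, rfl⟩ : ∃ q, p = q + 2 := ⟨p - 2, by omega⟩
  have hγdef : γ = Complex.exp (↑(Real.pi / 3) * Complex.I) := by
    show Complex.exp _ = _
    congr 1
    push_cast
    ring
  have him : γ.im = Real.sqrt 3 / 2 := by
    rw [hγdef, Complex.exp_ofReal_mul_I_im, Real.sin_pi_div_three]
  have himpos : 0 < γ.im := by rw [him]; positivity
  have hγ3 : γ ^ 3 = -1 := by
    rw [hγdef, ← Complex.exp_nat_mul]
    rw [show ((3 : ℕ) : ℂ) * (↑(Real.pi / 3) * Complex.I) = ↑Real.pi * Complex.I by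
      push_cast; ring]
    exact Complex.exp_pi_mul_I
  have hne : γ + 1 ≠ 0 := by
    intro h
    have : γ = -1 := by linear_combination h
    rw [this] at himpos
    simp at himpos
  have hγ2 : γ ^ 2 = γ - 1 := by
    have h0 : (γ + 1) * (γ ^ 2 - γ + 1) = 0 := by linear_combination hγ3
    have h1 : γ ^ 2 - γ + 1 = 0 := (mul_eq_zero.mp h0).resolve_left hne
    linear_combination h1
  refine ⟨?_, ?_, ?_⟩
  · show (-1 : ℂ) + γ * (-1) ^ (q + 2 + 1) * (-1) + γ ^ 2 * (-1) ^ (2 * (q + 2)) * (-1) ^ (q + 2 + 1)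
      + γ ^ 3 * (-1) ^ (2 * (q + 2) - 1) * (-1) ^ (2 * (q + 2))
      + γ ^ 4 * (-1) ^ (q + 2 - 1) * (-1) ^ (2 * (q + 2) - 1)
      + γ ^ 5 * (-1) ^ (q + 2 - 1) = 0
    rw [show 2 * (q + 2) - 1 = 2 * q + 3 by omega, show 2 * (q + 2) = 2 * q + 4 by omega,
      show q + 2 - 1 = q + 1 by omega]
    simp only [pow_add, pow_mul, neg_one_sq, one_pow, one_mul]
    linear_combination ((-(γ + 1)) + (-1 : ℂ) ^ q * (γ - γ ^ 2) * (γ + 1)) * hγ2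
  · have H : HasDerivAt
        (fun x : ℂ => x + γ * x ^ (q + 2 + 1) * (-1) + γ ^ 2 * x ^ (2 * (q + 2)) * (-1) ^ (q + 2 + 1)
          + γ ^ 3 * x ^ (2 * (q + 2) - 1) * (-1) ^ (2 * (q + 2))
          + γ ^ 4 * x ^ (q + 2 - 1) * (-1) ^ (2 * (q + 2) - 1)
          + γ ^ 5 * (-1) ^ (q + 2 - 1))
        (1 + γ * (((q + 2 + 1 : ℕ) : ℂ) * (-1) ^ (q + 2 + 1 - 1)) * (-1)
          + γ ^ 2 * (((2 * (q + 2) : ℕ) : ℂ) * (-1) ^ (2 * (q + 2) - 1)) * (-1) ^ (q + 2 + 1)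
          + γ ^ 3 * (((2 * (q + 2) - 1 : ℕ) : ℂ) * (-1) ^ (2 * (q + 2) - 1 - 1)) * (-1) ^ (2 * (q + 2))
          + γ ^ 4 * (((q + 2 - 1 : ℕ) : ℂ) * (-1) ^ (q + 2 - 1 - 1)) * (-1) ^ (2 * (q + 2) - 1)
          + 0) (-1) := by
      exact (((((hasDerivAt_id (-1 : ℂ)).add
        (((hasDerivAt_pow (q + 2 + 1) (-1)).const_mul γ).mul_const (-1))).add
        (((hasDerivAt_pow (2 * (q + 2)) (-1)).const_mul (γ ^ 2)).mul_const ((-1) ^ (q + 2 + 1)))).add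
        (((hasDerivAt_pow (2 * (q + 2) - 1) (-1)).const_mul (γ ^ 3)).mul_const ((-1) ^ (2 * (q + 2))))).add
        (((hasDerivAt_pow (q + 2 - 1) (-1)).const_mul (γ ^ 4)).mul_const ((-1) ^ (2 * (q + 2) - 1)))).add
        (hasDerivAt_const (-1 : ℂ) (γ ^ 5 * (-1) ^ (q + 2 - 1)))
    refine H.deriv.trans ?_
    rw [show 2 * (q + 2) - 1 = 2 * q + 3 by omega, show 2 * (q + 2) = 2 * q + 4 by omega,
      show q + 2 - 1 = q + 1 by omega, show 2 * q + 3 - 1 = 2 * q + 2 by omega,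
      show q + 1 - 1 = q by omega, show q + 2 + 1 - 1 = q + 2 by omega]
    push_cast
    simp only [pow_add, pow_mul, neg_one_sq, one_pow, one_mul]
    linear_combination (((2 * (q : ℂ) + 3) * (γ + 1)) +
      (-1 : ℂ) ^ q * (-((q : ℂ) + 1) * γ ^ 2 - ((q : ℂ) + 1) * γ + (2 * (q : ℂ) + 4))) * hγ2
  · intro h
    have h' := congrArg Complex.im h
    rcases Nat.even_or_odd (q + 2) with he | ho
    · rw [he.neg_one_pow] at h'
      simp [Complex.add_im, Complex.sub_im, Complex.mul_im, Complex.mul_re] at h'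
      rcases h' with h' | h'
      · linarith
      · have : (0 : ℝ) ≤ (q : ℝ) := q.cast_nonneg
        linarith
    · rw [ho.neg_one_pow] at h'
      simp [Complex.add_im, Complex.sub_im, Complex.mul_im, Complex.mul_re] at h'
      rcases h' with h' | h'
      · linarith
      · have : (0 : ℝ) ≤ (q : ℝ) := q.cast_nonneg
        linarith
end
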